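/- Let n ≥ 2 and let h : {0,1}* → {0,1}* be an r-uniform morphism with 2 ≤ r ≤ 4n and h(0) ≠ h(1). Let 𝐮 be an infinite fixed point of h (indexed from 1) that is not ultimately periodic. Assume: (i) h satisfies the algebraic condition for σ_n; (ii) every factor of 𝐮 of length r is markable with respect to h and 𝐮; (iii) every factor of 𝐮 of length 2 is a factor of 0110; (iv) ⌊(⌊(9n² − 6n + 1 + 2(r−1))/r⌋ + 2(r−1))/r⌋ ≤ 2; and (v) the word v = D_n(h(h(0110))) over Σ_n satisfies: every factor of v with period q has length at most q·n/(n−1), and for every q ≥ 1, v has no factor of period q and length q + n − 1. Then the infinite word w over Σ_n defined by w_i = i for 1 ≤ i ≤ n−1 and, for i ≥ 1, w_{i+n−1} = w_i if 𝐮(i) = 0 and otherwise w_{i+n−1} = the unique letter of Σ_n not in {w_i, w_{i+1}, …, w_{i+n−2}}, contains no factor of exponent greater than n/(n−1); that is, every finite factor of w with period q has length at most q·n/(n−1). -/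

import Mathlib

/-- The factor of the infinite word `w` starting at position `i`, of length `L`. -/
def wordOf {α : Type*} (w : ℕ → α) (i L : ℕ) : List α :=
  (List.range L).map fun k => w (i + k)

/-- The finite word `v` occurs in the infinite word `w` at position `i`. -/
def OccursAt {α : Type*} (v : List α) (w : ℕ → α) (i : ℕ) : Prop :=
  wordOf w i v.length = v

/-- The finite word `v` is a prefix of the infinite word `w`. -/
def PrefixOfInf {α : Type*} (v : List α) (w : ℕ → α) : Prop :=
  wordOf w 0 v.length = v

/-- The extension of the morphism `h` on `{0,1}` to binary words. -/
def mor (h : Bool → List Bool) (w : List Bool) : List Bool :=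
  (w.map h).flatten

/-- The infinite binary word `u` is a fixed point of the morphism `h`:
the image of any prefix of `u` is again a prefix of `u`. -/
def FixedPointOf (h : Bool → List Bool) (u : ℕ → Bool) : Prop :=
  ∀ p : List Bool, PrefixOfInf p u → PrefixOfInf (mor h p) u

/-- `v` is markable with respect to the `r`-uniform morphism `h` and its fixed point `u`:
whenever `h(X)xv` and `h(Y)yv` are prefixes of `u` with `|x|, |y| < r`, then `x = y`. -/
def Markable (h : Bool → List Bool) (r : ℕ) (u : ℕ → Bool) (v : List Bool) : Prop :=
  ∀ X Y x y : List Bool, x.length < r → y.length < r →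
    PrefixOfInf (mor h X ++ x ++ v) u → PrefixOfInf (mor h Y ++ y ++ v) u → x = y
/-- The finite word `u` has period `q`: `u_i = u_{i+q}` for all valid indices. -/
def HasPeriodL {α : Type*} (u : List α) (q : ℕ) : Prop :=
  ∀ i, i + q < u.length → u[i]? = u[i + q]?

/-- The images of the letters 0 and 1 under the Pansiot map `σ_n` (on `Fin n`, where the
value `k` represents the letter `k+1` of `Σ_n = {1,…,n}`): `σ_n(0)` sends the letter
`i ↦ i+1` for `1 ≤ i ≤ n−2`, sends `n−1 ↦ 1` and fixes `n`; `σ_n(1)` is the `n`-cycle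
`i ↦ i+1 (mod n)`. -/
def sigmaLetter (n : ℕ) : Bool → Equiv.Perm (Fin n)
  | true => finRotate n
  | false => if h : 1 ≤ n then Equiv.swap ⟨n - 1, by omega⟩ ⟨0, by omega⟩ * finRotate n else 1

/-- The monoid homomorphism `σ_n` on binary words (`σ_n(uw) = σ_n(u) ∘ σ_n(w)`). -/
def sigmaW (n : ℕ) (w : List Bool) : Equiv.Perm (Fin n) :=
  (w.map (sigmaLetter n)).prod

/-- `h` satisfies the algebraic condition for `σ_n`: some `τ` conjugates `σ_n(h(0))` to
`σ_n(0)` and `σ_n(h(1))` to `σ_n(1)`. -/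
def AlgCond (n : ℕ) (h : Bool → List Bool) : Prop :=
  ∃ τ : Equiv.Perm (Fin n),
    τ * sigmaW n (h false) * τ⁻¹ = sigmaLetter n false ∧
    τ * sigmaW n (h true) * τ⁻¹ = sigmaLetter n true

/-- Longest common prefix of two binary words. -/
def lcp (a b : List Bool) : List Bool :=
  ((a.zip b).takeWhile fun p => p.1 == p.2).map Prod.fst

/-- The occurrence at position `d` of the factor of length `L` of the infinite word `u`
is maximal with period `q`: it can be extended neither to the left nor to the right
keeping period `q`. -/
def MaxOcc (u : ℕ → Bool) (d L q : ℕ) : Prop :=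
  (d = 0 ∨ ¬ HasPeriodL (wordOf u (d - 1) (L + 1)) q) ∧
    ¬ HasPeriodL (wordOf u d (L + 1)) q

/-- The smallest letter of `Fin n` not belonging to `S` (when `S ≠ Fin n`). -/
def missingLetter {n : ℕ} (hn : 1 ≤ n) (S : Finset (Fin n)) : Fin n :=
  if h : Sᶜ.Nonempty then Sᶜ.min' h else ⟨0, hn⟩

/-- The word over `Σ_n` (represented by `Fin n`, value `k` = letter `k+1`) with
prefix `1 2 ⋯ (n-1)` whose Pansiot encoding is the infinite binary word `u`:
`w_k = k` (as a letter, `k+1`) for `k < n-1`, and `w_{k+n-1} = w_k` if `u k = 0`,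
while `w_{k+n-1}` is the letter not occurring among `w_k, …, w_{k+n-2}` if `u k = 1`. -/
def pansiotWord (n : ℕ) (hn : 2 ≤ n) (u : ℕ → Bool) (k : ℕ) : Fin n :=
  if hk : k < n - 1 then ⟨k, by omega⟩
  else if u (k - (n - 1)) then
    missingLetter (by omega)
      ((Finset.range (n - 1)).attach.image fun j =>
        pansiotWord n hn u (k - (n - 1) + j.1))
  else pansiotWord n hn u (k - (n - 1))
termination_by k
decreasing_by
  · have := j.2; simp only [Finset.mem_range] at this; omega
  · omega

/-- The Pansiot decoding `D_n(b)` of a finite binary word `b`: the word of length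
`|b| + n - 1` over `Σ_n` with prefix `1 2 ⋯ (n-1)` whose Pansiot encoding is `b`. -/
def pansiotDecode (n : ℕ) (hn : 2 ≤ n) (b : List Bool) : List (Fin n) :=
  (List.range (b.length + (n - 1))).map (pansiotWord n hn fun i => b.getD i false)


set_option linter.unusedVariables false
set_option linter.unnecessarySeqFocus false

section CRLemmas

@[simp] lemma wordOf_length {α : Type*} (w : ℕ → α) (i L : ℕ) : (wordOf w i L).length = L := by
  simp [wordOf]

lemma wordOf_getElem? {α : Type*} (w : ℕ → α) (i L k : ℕ) (hk : k < L) :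
    (wordOf w i L)[k]? = some (w (i + k)) := by
  simp [wordOf, List.getElem?_map, List.getElem?_range, hk]

lemma wordOf_append {α : Type*} (w : ℕ → α) (i a b : ℕ) :
    wordOf w i (a + b) = wordOf w i a ++ wordOf w (i + a) b := by
  apply List.ext_getElem?
  intro k
  rcases Nat.lt_or_ge k a with hk | hk
  · rw [wordOf_getElem? _ _ _ _ (by omega), List.getElem?_append_left (by simp [hk]),
      wordOf_getElem? _ _ _ _ hk]
  · rcases Nat.lt_or_ge k (a + b) with hk2 | hk2
    · rw [wordOf_getElem? _ _ _ _ hk2, List.getElem?_append_right (by simp [hk]),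
        wordOf_length, wordOf_getElem? _ _ _ _ (by omega)]
      congr 2
      omega
    · rw [List.getElem?_eq_none (by simp; omega), List.getElem?_eq_none (by simp; omega)]

lemma hasPeriodL_wordOf_iff {α : Type*} (w : ℕ → α) (i L q : ℕ) :
    HasPeriodL (wordOf w i L) q ↔ ∀ t, t + q < L → w (i + t) = w (i + t + q) := by
  constructor
  · intro hp t ht
    have := hp t (by simpa using ht)
    rw [wordOf_getElem? _ _ _ _ (by omega), wordOf_getElem? _ _ _ _ (by omega)] at this
    simpa [Nat.add_assoc] using this
  · intro hp t ht
    simp only [wordOf_length] at ht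
    rw [wordOf_getElem? _ _ _ _ (by omega), wordOf_getElem? _ _ _ _ (by omega)]
    rw [← Nat.add_assoc]
    exact congrArg some (hp t ht)

section morlem

lemma prefixOfInf_wordOf {α : Type*} (w : ℕ → α) (m : ℕ) : PrefixOfInf (wordOf w 0 m) w := by
  simp [PrefixOfInf]

lemma eq_wordOf_of_prefixOfInf {α : Type*} {w : ℕ → α} {p : List α} (hp : PrefixOfInf p w) :
    p = wordOf w 0 p.length := hp.symm

@[simp] lemma mor_nil (h : Bool → List Bool) : mor h [] = [] := by simp [mor]

@[simp] lemma mor_cons (h : Bool → List Bool) (a : Bool) (p : List Bool) :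
    mor h (a :: p) = h a ++ mor h p := by simp [mor]

lemma mor_append (h : Bool → List Bool) (a b : List Bool) :
    mor h (a ++ b) = mor h a ++ mor h b := by simp [mor]

lemma mor_length {h : Bool → List Bool} {r : ℕ} (h0 : (h false).length = r)
    (h1 : (h true).length = r) (p : List Bool) : (mor h p).length = r * p.length := by
  induction p with
  | nil => simp
  | cons a p ih =>
    rw [mor_cons, List.length_append, ih, List.length_cons]
    cases a <;> (first | rw [h0] | rw [h1]) <;> ring

lemma mor_mor (h : Bool → List Bool) (p : List Bool) :
    mor h (mor h p) = mor (fun b => mor h (h b)) p := by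
  induction p with
  | nil => simp
  | cons a p ih => rw [mor_cons, mor_append, ih, mor_cons]

end morlem

section sigm

lemma sigmaW_nil (n : ℕ) : sigmaW n [] = 1 := by simp [sigmaW]

lemma sigmaW_singleton (n : ℕ) (b : Bool) : sigmaW n [b] = sigmaLetter n b := by simp [sigmaW]

lemma sigmaW_append (n : ℕ) (a b : List Bool) :
    sigmaW n (a ++ b) = sigmaW n a * sigmaW n b := by
  simp [sigmaW]

variable {n : ℕ}

lemma sigmaLetter_true_apply (hn : 2 ≤ n) (k : ℕ) (hk : k < n - 1) :
    sigmaLetter n true ⟨k, by omega⟩ = ⟨k + 1, by omega⟩ := by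
  obtain ⟨m, rfl⟩ : ∃ m, n = m + 1 := ⟨n - 1, by omega⟩
  simp only [sigmaLetter, finRotate_succ_apply]
  ext
  simp [Fin.add_def]
  omega

lemma sigmaLetter_true_last (hn : 2 ≤ n) :
    sigmaLetter n true ⟨n - 1, by omega⟩ = ⟨0, by omega⟩ := by
  obtain ⟨m, rfl⟩ : ∃ m, n = m + 1 := ⟨n - 1, by omega⟩
  simp only [sigmaLetter, finRotate_succ_apply]
  ext
  simp [Fin.add_def]

lemma sigmaLetter_false_apply (hn : 2 ≤ n) (k : ℕ) (hk : k < n - 2) :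
    sigmaLetter n false ⟨k, by omega⟩ = ⟨k + 1, by omega⟩ := by
  have h1 : (1 : ℕ) ≤ n := by omega
  simp only [sigmaLetter, dif_pos h1, Equiv.Perm.mul_apply]
  have : finRotate n ⟨k, by omega⟩ = ⟨k + 1, by omega⟩ := by
    have := sigmaLetter_true_apply (n := n) hn k (by omega)
    simpa [sigmaLetter] using this
  rw [this]
  apply Equiv.swap_apply_of_ne_of_ne <;> (intro hc; rw [Fin.mk.injEq] at hc; omega)

lemma sigmaLetter_false_penult (hn : 2 ≤ n) :
    sigmaLetter n false ⟨n - 2, by omega⟩ = ⟨0, by omega⟩ := by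
  have h1 : (1 : ℕ) ≤ n := by omega
  simp only [sigmaLetter, dif_pos h1, Equiv.Perm.mul_apply]
  have : finRotate n ⟨n - 2, by omega⟩ = ⟨n - 1, by omega⟩ := by
    have h := sigmaLetter_true_apply (n := n) hn (n - 2) (by omega)
    simp only [sigmaLetter] at h
    rw [h]
    ext
    simp
    omega
  rw [this]
  exact Equiv.swap_apply_left _ _

lemma sigmaLetter_false_last (hn : 2 ≤ n) :
    sigmaLetter n false ⟨n - 1, by omega⟩ = ⟨n - 1, by omega⟩ := by
  have h1 : (1 : ℕ) ≤ n := by omega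
  simp only [sigmaLetter, dif_pos h1, Equiv.Perm.mul_apply]
  have : finRotate n ⟨n - 1, by omega⟩ = ⟨0, by omega⟩ := by
    have := sigmaLetter_true_last (n := n) hn
    simpa [sigmaLetter] using this
  rw [this]
  exact Equiv.swap_apply_right _ _

lemma sigmaLetter_injective (hn : 2 ≤ n) : sigmaLetter n false ≠ sigmaLetter n true := by
  intro hc
  have h1 := sigmaLetter_false_last (n := n) hn
  have h2 := sigmaLetter_true_last (n := n) hn
  rw [hc, h2] at h1
  rw [Fin.mk.injEq] at h1
  omega

lemma sigmaLetter_inj (hn : 2 ≤ n) {a b : Bool} (hab : sigmaLetter n a = sigmaLetter n b) : a = b := by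
  cases a <;> cases b <;> first
    | rfl
    | exact absurd hab (sigmaLetter_injective hn)
    | exact absurd hab.symm (sigmaLetter_injective hn)

lemma perm_eq_of_agree (hn : 2 ≤ n) {ρ σ : Equiv.Perm (Fin n)}
    (hag : ∀ k, (hk : k < n - 1) → ρ ⟨k, by omega⟩ = σ ⟨k, by omega⟩) : ρ = σ := by
  ext x
  rcases Nat.lt_or_ge x.1 (n - 1) with h1 | h1
  · have := hag x.1 h1
    have hx : (⟨x.1, x.2⟩ : Fin n) = x := rfl
    rw [hx] at this
    exact congrArg Fin.val this
  · have hx : x = ⟨n - 1, by omega⟩ := by ext; simp; omega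
    by_contra hne
    set y := σ.symm (ρ x) with hy
    have hyx : y ≠ x := by
      intro hc
      apply hne
      have : σ y = ρ x := by simp [hy]
      rw [hc] at this
      exact (congrArg Fin.val this).symm
    have hylt : y.1 < n - 1 := by
      rcases Nat.lt_or_ge y.1 (n - 1) with h2 | h2
      · exact h2
      · exfalso; apply hyx; ext; rw [hx]; simp; omega
    have h3 : ρ ⟨y.1, by omega⟩ = σ ⟨y.1, by omega⟩ := hag y.1 hylt
    have h4 : (⟨y.1, y.2⟩ : Fin n) = y := rfl
    have h5 : ρ y = σ y := by rw [← h4]; exact h3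
    have h6 : σ y = ρ x := by simp [hy]
    rw [h6] at h5
    exact hyx (ρ.injective h5)

end sigm

section core
variable {n : ℕ}

lemma window_compl (hn : 2 ≤ n) (ρ : Equiv.Perm (Fin n)) (f : ℕ → Fin n)
    (hf : ∀ j, (hj : j < n - 1) → f j = ρ ⟨j, by omega⟩) :
    ((Finset.range (n - 1)).attach.image fun j => f j.1)ᶜ = {ρ ⟨n - 1, by omega⟩} := by
  have hcard : ((Finset.range (n - 1)).attach.image fun j => f j.1).card = n - 1 := by
    rw [Finset.card_image_of_injOn, Finset.card_attach, Finset.card_range]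
    intro a _ b _ hab
    have ha := a.2; have hb := b.2
    simp only [Finset.mem_range] at ha hb
    have hab' : f a.1 = f b.1 := hab
    rw [hf a.1 ha, hf b.1 hb] at hab'
    rename' hab' => hab
    have := ρ.injective hab
    rw [Fin.mk.injEq] at this
    exact Subtype.ext this
  have hmem : ρ ⟨n - 1, by omega⟩ ∈ ((Finset.range (n - 1)).attach.image fun j => f j.1)ᶜ := by
    rw [Finset.mem_compl]
    intro hc
    rw [Finset.mem_image] at hc
    obtain ⟨j, _, hj⟩ := hc
    have hjlt := j.2
    simp only [Finset.mem_range] at hjlt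
    rw [hf j.1 hjlt] at hj
    have := ρ.injective hj
    rw [Fin.mk.injEq] at this
    omega
  have hcc : ((Finset.range (n - 1)).attach.image fun j => f j.1)ᶜ.card = 1 := by
    rw [Finset.card_compl, hcard, Fintype.card_fin]
    omega
  symm
  apply Finset.eq_of_subset_of_card_le
  · intro y hy
    rw [Finset.mem_singleton] at hy
    rw [hy]
    exact hmem
  · rw [hcc, Finset.card_singleton]

lemma missingLetter_of_compl_singleton (hn1 : 1 ≤ n) {S : Finset (Fin n)} {a : Fin n}
    (hS : Sᶜ = {a}) : missingLetter hn1 S = a := by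
  rw [missingLetter, dif_pos (show Sᶜ.Nonempty by rw [hS]; exact ⟨a, Finset.mem_singleton_self a⟩)]
  apply le_antisymm
  · exact Finset.min'_le _ _ (by rw [hS]; exact Finset.mem_singleton_self a)
  · apply Finset.le_min'
    intro y hy
    rw [hS, Finset.mem_singleton] at hy
    exact le_of_eq hy.symm

lemma sigmaW_wordOf_succ (u' : ℕ → Bool) (m : ℕ) :
    sigmaW n (wordOf u' 0 (m + 1)) = sigmaW n (wordOf u' 0 m) * sigmaLetter n (u' m) := by
  rw [wordOf_append u' 0 m 1, sigmaW_append]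
  congr 1
  have : wordOf u' (0 + m) 1 = [u' m] := by rw [wordOf, List.range_succ, List.range_zero]; simp
  rw [this]
  simp [sigmaW]

lemma pansiot_window (hn : 2 ≤ n) (u' : ℕ → Bool) :
    ∀ i k, (hk : k < n - 1) →
      pansiotWord n hn u' (i + k) = sigmaW n (wordOf u' 0 i) ⟨k, by omega⟩ := by
  intro i
  induction i with
  | zero =>
    intro k hk
    rw [pansiotWord, dif_pos (show 0 + k < n - 1 by omega)]
    have : wordOf u' 0 0 = [] := by simp [wordOf]
    rw [this]
    simp [sigmaW]
  | succ i ih =>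
    intro k hk
    rw [sigmaW_wordOf_succ, Equiv.Perm.mul_apply]
    rcases Nat.lt_or_ge k (n - 2) with hk2 | hk2
    · have he : i + 1 + k = i + (k + 1) := by omega
      rw [he, ih (k + 1) (by omega)]
      congr 1
      cases hb : u' i
      · exact (sigmaLetter_false_apply hn k hk2).symm
      · exact (sigmaLetter_true_apply hn k (by omega)).symm
    · have hk3 : k = n - 2 := by omega
      subst hk3
      have he : i + 1 + (n - 2) = i + (n - 1) := by omega
      rw [he, pansiotWord, dif_neg (show ¬ (i + (n - 1) < n - 1) by omega)]
      have hidx : i + (n - 1) - (n - 1) = i := by omega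
      rw [hidx]
      cases hb : u' i
      · rw [if_neg (by simp : ¬ (false = true))]
        have h0 : pansiotWord n hn u' i = sigmaW n (wordOf u' 0 i) ⟨0, by omega⟩ := by
          have := ih 0 (by omega)
          simpa using this
        rw [h0]
        congr 1
        have := sigmaLetter_false_penult (n := n) hn
        rw [this]
      · rw [if_pos rfl]
        have hcompl := window_compl hn (sigmaW n (wordOf u' 0 i))
          (fun j => pansiotWord n hn u' (i + j)) (fun j hj => ih j hj)
        rw [missingLetter_of_compl_singleton _ hcompl]
        congr 1
        have h2 := sigmaLetter_true_apply (n := n) hn (n - 2) (by omega)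
        rw [h2]
        ext
        simp
        omega

lemma pansiot_shift (hn : 2 ≤ n) (u' : ℕ → Bool) (i : ℕ) :
    ∀ k, pansiotWord n hn u' (i + k) =
      sigmaW n (wordOf u' 0 i) (pansiotWord n hn (fun t => u' (i + t)) k) := by
  intro k
  induction k using Nat.strong_induction_on with
  | _ k ihk =>
    rcases Nat.lt_or_ge k (n - 1) with hk | hk
    · rw [pansiot_window hn u' i k hk]
      congr 1
      rw [pansiotWord, dif_pos hk]
    · set m := k - (n - 1) with hm
      have hk2 : k = m + (n - 1) := by omega
      -- unfold LHS
      rw [pansiotWord, dif_neg (show ¬ (i + k < n - 1) by omega)]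
      have hidx : i + k - (n - 1) = i + m := by omega
      rw [hidx]
      -- unfold RHS inner
      conv_rhs => rw [pansiotWord, dif_neg (show ¬ (k < n - 1) by omega)]
      cases hb : u' (i + m)
      · rw [if_neg (by simp : ¬ (false = true)), if_neg (by simp : ¬ (false = true))]
        exact ihk m (by omega)
      · rw [if_pos rfl, if_pos rfl]
        -- LHS windows at i + m
        have hL := window_compl hn (sigmaW n (wordOf u' 0 (i + m)))
          (fun j => pansiotWord n hn u' (i + m + j))
          (fun j hj => pansiot_window hn u' (i + m) j hj)
        rw [missingLetter_of_compl_singleton _ hL]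
        have hR := window_compl hn (sigmaW n (wordOf (fun t => u' (i + t)) 0 m))
          (fun j => pansiotWord n hn (fun t => u' (i + t)) (m + j))
          (fun j hj => pansiot_window hn (fun t => u' (i + t)) m j hj)
        rw [missingLetter_of_compl_singleton _ hR]
        -- ρ_{i+m} = ρ_i * ρ'_m
        have hsplit : sigmaW n (wordOf u' 0 (i + m)) =
            sigmaW n (wordOf u' 0 i) * sigmaW n (wordOf (fun t => u' (i + t)) 0 m) := by
          rw [wordOf_append u' 0 i m, sigmaW_append]
          congr 2
          apply List.ext_getElem (by simp [wordOf])
          intro t h1 h2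
          simp [wordOf]
        rw [hsplit]
        rfl

lemma pansiot_local (hn : 2 ≤ n) (u₁ u₂ : ℕ → Bool) (m : ℕ)
    (hag : ∀ j, j < m → u₁ j = u₂ j) :
    ∀ k, k < m + (n - 1) → pansiotWord n hn u₁ k = pansiotWord n hn u₂ k := by
  intro k
  induction k using Nat.strong_induction_on with
  | _ k ihk =>
    intro hkm
    rcases Nat.lt_or_ge k (n - 1) with hk | hk
    · rw [pansiotWord, dif_pos hk, pansiotWord, dif_pos hk]
    · rw [pansiotWord, dif_neg (show ¬ (k < n - 1) by omega)]
      conv_rhs => rw [pansiotWord, dif_neg (show ¬ (k < n - 1) by omega)]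
      have hbit : u₁ (k - (n - 1)) = u₂ (k - (n - 1)) := hag _ (by omega)
      rw [hbit]
      have hrec : ∀ j, j < n - 1 →
          pansiotWord n hn u₁ (k - (n - 1) + j) = pansiotWord n hn u₂ (k - (n - 1) + j) := by
        intro j hj
        exact ihk _ (by omega) (by omega)
      cases hb : u₂ (k - (n - 1))
      · simp only [Bool.false_eq_true, if_false]
        exact ihk _ (by omega) (by omega)
      · simp only [if_true]
        congr 1
        apply Finset.image_congr
        intro j hj
        have hjlt := j.2
        simp only [Finset.mem_range] at hjlt
        exact hrec j.1 hjlt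

end core

section blocks

variable {α : Type*} {n r : ℕ} {h : Bool → List Bool} {u : ℕ → Bool}

lemma wordOf_ext {w w' : ℕ → α} {i i' L : ℕ} (hp : ∀ t, t < L → w (i + t) = w' (i' + t)) :
    wordOf w i L = wordOf w' i' L := by
  apply List.ext_getElem?
  intro k
  rcases Nat.lt_or_ge k L with hk | hk
  · rw [wordOf_getElem? _ _ _ _ hk, wordOf_getElem? _ _ _ _ hk, hp k hk]
  · rw [List.getElem?_eq_none (by simp [hk]), List.getElem?_eq_none (by simp [hk])]

lemma wordOf_one (w : ℕ → α) (m : ℕ) : wordOf w m 1 = [w m] := by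
  rw [wordOf, List.range_succ, List.range_zero]; simp

/-- prefix images under a uniform fixed-point morphism -/
lemma mor_prefix_eq (hg : FixedPointOf h u) {R : ℕ} (hR : ∀ b, (h b).length = R) :
    ∀ m, mor h (wordOf u 0 m) = wordOf u 0 (R * m) := by
  intro m
  have hpre := hg (wordOf u 0 m) (prefixOfInf_wordOf u m)
  have hlen : (mor h (wordOf u 0 m)).length = R * m := by
    have : (mor h (wordOf u 0 m)).length = R * (wordOf u 0 m).length :=
      mor_length (hR false) (hR true) _
    simpa using this
  have := eq_wordOf_of_prefixOfInf hpre
  rw [hlen] at this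
  exact this

lemma block_eq (hg : FixedPointOf h u) {R : ℕ} (hR : ∀ b, (h b).length = R) (k : ℕ) :
    wordOf u (R * k) R = h (u k) := by
  have h1 : mor h (wordOf u 0 (k + 1)) = wordOf u 0 (R * (k + 1)) := mor_prefix_eq hg hR (k + 1)
  have h2 : wordOf u 0 (k + 1) = wordOf u 0 k ++ [u k] := by
    rw [wordOf_append u 0 k 1]
    simp [wordOf_one]
  rw [h2, mor_append, mor_prefix_eq hg hR k] at h1
  have h3 : mor h [u k] = h (u k) := by simp [mor]
  rw [h3] at h1
  have h4 : wordOf u 0 (R * (k + 1)) = wordOf u 0 (R * k) ++ wordOf u (R * k) R := by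
    have : R * (k + 1) = R * k + R := by ring
    rw [this, wordOf_append]
    simp
  rw [h4] at h1
  exact (List.append_cancel_left h1).symm

lemma mor_wordOf (hg : FixedPointOf h u) {R : ℕ} (hR : ∀ b, (h b).length = R) (a m : ℕ) :
    mor h (wordOf u a m) = wordOf u (R * a) (R * m) := by
  induction m with
  | zero => simp [wordOf, mor]
  | succ m ih =>
    have h2 : wordOf u a (m + 1) = wordOf u a m ++ [u (a + m)] := by
      rw [wordOf_append u a m 1, wordOf_one]
    rw [h2, mor_append, ih]
    have h3 : mor h [u (a + m)] = h (u (a + m)) := by simp [mor]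
    rw [h3, ← block_eq hg hR (a + m)]
    have : R * (m + 1) = R * m + R := by ring
    rw [this, wordOf_append]
    congr 2 <;> ring

end blocks

section sigalg

variable {n : ℕ} {h : Bool → List Bool}

lemma sigmaW_mor (halg : AlgCond n h) :
    ∃ τ : Equiv.Perm (Fin n), ∀ Z : List Bool,
      sigmaW n (mor h Z) = τ⁻¹ * sigmaW n Z * τ := by
  obtain ⟨τ, hf, ht⟩ := halg
  refine ⟨τ, fun Z => ?_⟩
  induction Z with
  | nil => simp [sigmaW, mor]
  | cons a Z ih =>
    have hl : sigmaW n (h a) = τ⁻¹ * sigmaLetter n a * τ := by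
      cases a
      · rw [← hf]; group
      · rw [← ht]; group
    have : sigmaW n (a :: Z) = sigmaLetter n a * sigmaW n Z := by
      simp [sigmaW]
    rw [show mor h (a :: Z) = h a ++ mor h Z by simp [mor], sigmaW_append, hl, ih, this]
    group

variable {u : ℕ → Bool}

lemma sigma_block (j q : ℕ) :
    sigmaW n (wordOf u 0 (j + q)) = sigmaW n (wordOf u 0 j) * sigmaW n (wordOf u j q) := by
  rw [wordOf_append u 0 j q, sigmaW_append]
  simp

lemma sigma_rotate (hn : 2 ≤ n) {i q e : ℕ}
    (hper : ∀ t, t < e → u (i + t) = u (i + t + q))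
    (hz : sigmaW n (wordOf u i q) = 1) :
    ∀ t, t ≤ e → sigmaW n (wordOf u (i + t) q) = 1 := by
  intro t
  induction t with
  | zero => intro _; simpa using hz
  | succ t ih =>
    intro ht
    have h1 : sigmaW n (wordOf u (i + t) q) = 1 := ih (by omega)
    have h2 : wordOf u (i + t) (q + 1) = [u (i + t)] ++ wordOf u (i + t + 1) q := by
      rw [show q + 1 = 1 + q by omega, wordOf_append u (i + t) 1 q, wordOf_one]
    have h3 : wordOf u (i + t) (q + 1) = wordOf u (i + t) q ++ [u (i + t + q)] := by
      rw [wordOf_append u (i + t) q 1, wordOf_one]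
    have h6 : u (i + t + q) = u (i + t) := (hper t (by omega)).symm
    have h5 : sigmaLetter n (u (i + t)) * sigmaW n (wordOf u (i + t + 1) q)
        = sigmaW n (wordOf u (i + t) q) * sigmaLetter n (u (i + t + q)) := by
      have hc := congrArg (sigmaW n) (h2.symm.trans h3)
      rw [sigmaW_append, sigmaW_append] at hc
      simpa [sigmaW] using hc
    rw [h1, h6, one_mul] at h5
    have h9 : sigmaW n (wordOf u (i + t + 1) q) = 1 := mul_left_cancel (by rw [h5, mul_one])
    have h10 : i + (t + 1) = i + t + 1 := by omega
    rw [h10]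
    exact h9

lemma h_letter_inj (hne : h false ≠ h true) {a b : Bool} (hab : h a = h b) : a = b := by
  cases a <;> cases b <;> simp_all

end sigalg

section markdvd

variable {n r : ℕ} {h : Bool → List Bool} {u : ℕ → Bool}

lemma prefix_decomp (hfix : FixedPointOf h u) (h0 : (h false).length = r)
    (h1 : (h true).length = r) (hr : 1 ≤ r) (m : ℕ) :
    PrefixOfInf (mor h (wordOf u 0 (m / r)) ++ wordOf u (r * (m / r)) (m % r)
      ++ wordOf u m r) u := by
  have hR : ∀ b : Bool, (h b).length = r := by intro b; cases b <;> assumption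
  rw [mor_prefix_eq hfix hR]
  have e0 : m = r * (m / r) + m % r := (Nat.div_add_mod m r).symm
  have e1 := wordOf_append u 0 (r * (m / r)) (m % r)
  rw [Nat.zero_add] at e1
  rw [← e0] at e1
  have e2 := wordOf_append u 0 m r
  rw [Nat.zero_add] at e2
  rw [← e1, ← e2]
  exact prefixOfInf_wordOf u (m + r)

lemma r_dvd_q (hn : 2 ≤ n) (hfix : FixedPointOf h u) (h0 : (h false).length = r)
    (h1 : (h true).length = r) (hr : 2 ≤ r)
    (hmark : ∀ v : List Bool, v.length = r → (∃ i, OccursAt v u i) → Markable h r u v)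
    {i q e : ℕ} (hq : 1 ≤ q) (he : r ≤ e)
    (hper : ∀ t, t < e → u (i + t) = u (i + t + q)) : r ∣ q := by
  set v₀ := wordOf u i r with hv
  have hocc : OccursAt v₀ u i := by
    rw [OccursAt, hv]
    simp
  have hmk : Markable h r u v₀ := hmark v₀ (by simp [hv]) ⟨i, hocc⟩
  have hsame : wordOf u (i + q) r = v₀ := by
    rw [hv]
    apply wordOf_ext
    intro t ht
    rw [show i + q + t = i + t + q by omega]
    exact (hper t (by omega)).symm
  have p1 := prefix_decomp hfix h0 h1 (by omega) i
  have p2 := prefix_decomp hfix h0 h1 (by omega) (i + q)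
  rw [hsame] at p2
  rw [← hv] at p1
  have hx := hmk (wordOf u 0 (i / r)) (wordOf u 0 ((i + q) / r))
    (wordOf u (r * (i / r)) (i % r)) (wordOf u (r * ((i + q) / r)) ((i + q) % r))
    (by simp [Nat.mod_lt]; exact Nat.mod_lt _ (by omega)) (by simp; exact Nat.mod_lt _ (by omega)) p1 p2
  have hlen := congrArg List.length hx
  simp only [wordOf_length] at hlen
  have hmod : i ≡ i + q [MOD r] := by
    unfold Nat.ModEq
    omega
  have := (Nat.modEq_iff_dvd' (Nat.le_add_right i q)).mp hmod
  simpa using this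

end markdvd

section helpers
variable {α : Type*}

lemma wordOf_infix (w : ℕ → α) (j M T : ℕ) (hjm : j + M ≤ T) :
    wordOf w j M <:+: wordOf w 0 T := by
  have e1 := wordOf_append w 0 j (M + (T - (j + M)))
  rw [Nat.zero_add] at e1
  rw [show j + (M + (T - (j + M))) = T by omega] at e1
  have e2 := wordOf_append w j M (T - (j + M))
  refine ⟨wordOf w 0 j, wordOf w (j + M) (T - (j + M)), ?_⟩
  rw [List.append_assoc, ← e2, ← e1]

lemma wordOf_getD (w : ℕ → α) (a L z : ℕ) (hz : z < L) (d : α) :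
    (wordOf w a L).getD z d = w (a + z) := by
  rw [List.getD_eq_getElem?_getD, wordOf_getElem? _ _ _ _ hz]
  rfl

lemma getD_append_offset (A C B : List α) (z : ℕ) (hz : z < C.length) (d : α) :
    (A ++ (C ++ B)).getD (A.length + z) d = C.getD z d := by
  rw [List.getD_eq_getElem?_getD, List.getD_eq_getElem?_getD]
  rw [List.getElem?_append_right (by omega : A.length ≤ A.length + z)]
  rw [show A.length + z - A.length = z by omega]
  rw [List.getElem?_append_left hz]

lemma infix_two_of_length_two {a b : Bool} (hif : [a, b] <:+: [false, true, true, false]) :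
    (a = false ∧ b = true) ∨ (a = true ∧ b = true) ∨ (a = true ∧ b = false) := by
  cases a <;> cases b <;> revert hif <;> decide

end helpers

lemma pansiotDecode_eq_wordOf (n : ℕ) (hn : 2 ≤ n) (b : List Bool) :
    pansiotDecode n hn b =
      wordOf (pansiotWord n hn (fun i => b.getD i false)) 0 (b.length + (n - 1)) := by
  simp [pansiotDecode, wordOf]

lemma wordOf_two {α : Type*} (w : ℕ → α) (m : ℕ) : wordOf w m 2 = [w m, w (m + 1)] := by
  rw [wordOf, show (2 : ℕ) = 1 + 1 from rfl, List.range_succ, List.range_succ, List.range_zero]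
  simp

lemma reduction
    {n : ℕ} (hn : 2 ≤ n) {h : Bool → List Bool} {r : ℕ} (hr₁ : 2 ≤ r)
    (h0 : (h false).length = r) (h1 : (h true).length = r)
    {u : ℕ → Bool} (hfix : FixedPointOf h u)
    (hfac2 : ∀ v : List Bool, v.length = 2 → (∃ i, OccursAt v u i) →
      v <:+: [false, true, true, false])
    (i M q : ℕ) (hq : 1 ≤ q) (hM : M ≤ r * r + n)
    (hper : ∀ t, t + q < M → pansiotWord n hn u (i + t) = pansiotWord n hn u (i + t + q)) :
    ∃ f : List (Fin n), f <:+: pansiotDecode n hn (mor h (mor h [false, true, true, false])) ∧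
      f.length = M ∧ HasPeriodL f q := by
  set Q := r * r with hQ
  set g : Bool → List Bool := fun b => mor h (h b) with hgdef
  have hgR : ∀ b : Bool, (g b).length = Q := by
    intro b
    rw [hgdef]
    simp only
    rw [mor_length h0 h1]
    cases b
    · rw [h0]
    · rw [h1]
  have hgfix : FixedPointOf g u := by
    intro p hp
    have h2 := hfix _ (hfix p hp)
    rw [mor_mor] at h2
    exact h2
  set b' := mor h (mor h [false, true, true, false]) with hb'
  have hb'eq : b' = g false ++ (g true ++ (g true ++ g false)) := by
    rw [hb', mor_mor, hgdef]
    simp [mor]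
  have hb'len : b'.length = Q + Q + (Q + Q) := by
    rw [hb'eq]
    simp [hgR]
    omega
  set W' := pansiotWord n hn (fun t => b'.getD t false) with hW'
  have hdec : pansiotDecode n hn b' = wordOf W' 0 (b'.length + (n - 1)) :=
    pansiotDecode_eq_wordOf n hn b'
  by_cases hMn : M ≤ n - 1
  · -- short case
    by_cases hqM : q < M
    · exfalso
      have e1 := pansiot_window hn u i 0 (by omega)
      have e2 := pansiot_window hn u i q (by omega)
      have e3 := hper 0 (by omega)
      rw [show i + 0 + q = i + q by omega] at e3
      rw [e1, e2] at e3
      have := (sigmaW n (wordOf u 0 i)).injective e3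
      rw [Fin.mk.injEq] at this
      omega
    · refine ⟨wordOf W' 0 M, ?_, by simp, ?_⟩
      · rw [hdec]
        exact wordOf_infix W' 0 M _ (by omega)
      · intro t ht
        rw [wordOf_length] at ht
        omega
  · -- main case
    set M' := M - (n - 1) with hM'
    have hM'ge : 1 ≤ M' := by omega
    have hM'le : M' ≤ Q + 1 := by omega
    set K := i / Q with hK
    set s := i % Q with hs
    have hQpos : 0 < Q := by rw [hQ]; exact Nat.mul_pos (by omega) (by omega)
    have hsQ : s < Q := Nat.mod_lt _ hQpos
    have hiKs : i = Q * K + s := by rw [hK, hs]; exact (Nat.div_add_mod i Q).symm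
    have hblocks : wordOf u (Q * K) (Q + Q) = g (u K) ++ g (u (K + 1)) := by
      rw [wordOf_append u (Q * K) Q Q, block_eq hgfix hgR K]
      congr 1
      rw [show Q * K + Q = Q * (K + 1) by ring]
      exact block_eq hgfix hgR (K + 1)
    have hpair := hfac2 (wordOf u K 2) (by simp) ⟨K, by rw [OccursAt]; simp⟩
    rw [wordOf_two] at hpair
    have hcases := infix_two_of_length_two hpair
    -- extract A, B decomposition
    obtain ⟨A, B, hAlen, hsplit⟩ : ∃ A B : List Bool, A.length ≤ Q + Q ∧
        b' = A ++ ((g (u K) ++ g (u (K + 1))) ++ B) := by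
      rcases hcases with ⟨ha, hb⟩ | ⟨ha, hb⟩ | ⟨ha, hb⟩
      · exact ⟨[], g true ++ g false, by simp,
          by rw [hb'eq, ha, hb]; simp [List.append_assoc]⟩
      · exact ⟨g false, g false, by rw [hgR]; omega,
          by rw [hb'eq, ha, hb]; simp [List.append_assoc]⟩
      · exact ⟨g false ++ g true, [], by simp [hgR],
          by rw [hb'eq, ha, hb]; simp [List.append_assoc]⟩
    set j := A.length + s with hj
    have hjM' : j + M' ≤ b'.length := by
      have : b'.length = A.length + ((Q + Q) + B.length) := by
        rw [hsplit]
        simp [hgR]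
        omega
      omega
    have hbits : ∀ t, t < M' → u (i + t) = b'.getD (j + t) false := by
      intro t ht
      have hst : s + t < Q + Q := by omega
      have e1 : u (i + t) = (wordOf u (Q * K) (Q + Q)).getD (s + t) false := by
        rw [wordOf_getD u (Q * K) (Q + Q) (s + t) hst]
        congr 1
        omega
      rw [e1, hblocks]
      have e2 := getD_append_offset A (g (u K) ++ g (u (K + 1))) B (s + t)
        (by simp [hgR]; omega) false
      rw [← hsplit] at e2
      rw [← e2]
      congr 1
      omega
    have hkey : ∀ k, k < M → pansiotWord n hn u (i + k) =
        (sigmaW n (wordOf u 0 i))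
          ((sigmaW n (wordOf (fun t => b'.getD t false) 0 j))⁻¹ (W' (j + k))) := by
      intro k hk
      have e1 := pansiot_shift hn u i k
      have e2 := pansiot_shift hn (fun t => b'.getD t false) j k
      have e3 : pansiotWord n hn (fun t => u (i + t)) k =
          pansiotWord n hn (fun t => b'.getD (j + t) false) k := by
        apply pansiot_local hn _ _ M' (fun t ht => hbits t ht) k (by omega)
      rw [e1, e3]
      congr 1
      have e4 : W' (j + k) = (sigmaW n (wordOf (fun t => b'.getD t false) 0 j))
          (pansiotWord n hn (fun t => b'.getD (j + t) false) k) := e2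
      rw [e4, ← Equiv.Perm.mul_apply, inv_mul_cancel, Equiv.Perm.one_apply]
    refine ⟨wordOf W' j M, ?_, by simp, ?_⟩
    · rw [hdec]
      exact wordOf_infix W' j M _ (by omega)
    · rw [hasPeriodL_wordOf_iff]
      intro t ht
      have k1 := hkey t (by omega)
      have k2 := hkey (t + q) (by omega)
      rw [show i + (t + q) = i + t + q by omega] at k2
      have := hper t ht
      rw [k1, k2] at this
      have h5 := (sigmaW n (wordOf u 0 i)).injective this
      have h6 := (sigmaW n (wordOf (fun t => b'.getD t false) 0 j))⁻¹.injective h5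
      rw [show j + (t + q) = j + t + q by omega] at h6
      exact h6

lemma hiter_arith {n r : ℕ} (hn : 2 ≤ n) (hr₁ : 2 ≤ r)
    (hiter : ((9 * n ^ 2 - 6 * n + 1 + 2 * (r - 1)) / r + 2 * (r - 1)) / r ≤ 2) :
    3 * n - 1 ≤ r := by
  have hrpos : 0 < r := by omega
  obtain ⟨X, hX⟩ : ∃ x, x = 9 * n ^ 2 - 6 * n + 1 := ⟨_, rfl⟩
  rw [← hX] at hiter
  have hstep1 : (X + 2 * (r - 1)) / r + 2 * (r - 1) < 3 * r := by
    have h0 := (Nat.div_lt_iff_lt_mul hrpos).mp (show ((X + 2 * (r - 1)) / r + 2 * (r - 1)) / r < 3 by omega)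
    have h0' : 3 * r = r * 3 := by ring
    omega
  have h2 : (X + 2 * (r - 1)) / r ≤ r + 1 := by omega
  have h3 := (Nat.div_lt_iff_lt_mul hrpos).mp (show (X + 2 * (r - 1)) / r < r + 2 by omega)
  have h4 : (r + 2) * r = r * r + 2 * r := by ring
  have h4' : r * (r + 2) = r * r + 2 * r := by ring
  have hA9 : X ≤ r * r + 1 := by omega
  obtain ⟨m, rfl⟩ : ∃ m, n = m + 2 := ⟨n - 2, by omega⟩
  have hb : 9 * (m + 2) ^ 2 = 9 * (m * m) + 36 * m + 36 := by ring
  have hd : (3 * m + 5) * (3 * m + 5) = 9 * (m * m) + 30 * m + 25 := by ring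
  have he : (3 * m + 4) * (3 * m + 4) + 6 * m + 9 = (3 * m + 5) * (3 * m + 5) := by ring
  by_contra hc
  push_neg at hc
  have h5 : r * r ≤ (3 * m + 4) * (3 * m + 4) := Nat.mul_le_mul (by omega) (by omega)
  omega

lemma kr_contradiction
    {n : ℕ} (hn : 2 ≤ n) {h : Bool → List Bool} {r : ℕ} (hr₁ : 2 ≤ r)
    (h0 : (h false).length = r) (h1 : (h true).length = r) (hne : h false ≠ h true)
    {u : ℕ → Bool} (hfix : FixedPointOf h u)
    (hmark : ∀ v : List Bool, v.length = r → (∃ i, OccursAt v u i) → Markable h r u v)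
    (hfac2 : ∀ v : List Bool, v.length = 2 → (∃ i, OccursAt v u i) →
      v <:+: [false, true, true, false])
    (τ : Equiv.Perm (Fin n)) (hτ : ∀ Z, sigmaW n (mor h Z) = τ⁻¹ * sigmaW n Z * τ)
    (hrn : 3 * n - 1 ≤ r)
    (hch2 : ∀ q : ℕ, 1 ≤ q → ¬ ∃ f : List (Fin n),
      f <:+: pansiotDecode n hn (mor h (mor h [false, true, true, false])) ∧
      f.length = q + (n - 1) ∧ HasPeriodL f q) :
    ∀ q, 1 ≤ q → ∀ i e,
      (∀ t, t < e → u (i + t) = u (i + t + q)) →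
      sigmaW n (wordOf u i q) = 1 →
      q ≤ e * (n - 1) + ((n - 1) * (n - 1) + 2 * (n - 1)) → False := by
  have hR : ∀ b : Bool, (h b).length = r := by intro b; cases b <;> assumption
  intro q
  induction q using Nat.strong_induction_on with
  | _ q ihq =>
  intro hq i e hper hz hinv
  rcases Nat.lt_or_ge e r with he | he
  · -- endgame: q is small, lift to a w-repetition of length q + (n-1), contradict hch2
    have hqb : q ≤ r * r + 1 := by
      -- q ≤ (r-1)(n-1) + (n-1)² + 2(n-1) = (n-1)(r+n) ≤ r² + 1 using r ≥ 3n-1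
      have b1 : e * (n - 1) ≤ (r - 1) * (n - 1) :=
        Nat.mul_le_mul_right _ (by omega)
      obtain ⟨m, rfl⟩ : ∃ m, n = m + 2 := ⟨n - 2, by omega⟩
      obtain ⟨d, hd⟩ : ∃ d, r = 3 * (m + 2) - 1 + d := ⟨r - (3 * (m + 2) - 1), by omega⟩
      subst hd
      simp only [show 3 * (m + 2) - 1 = 3 * m + 5 by omega, show m + 2 - 1 = m + 1 by omega] at *
      nlinarith [hinv, b1]
    have hρ : sigmaW n (wordOf u 0 (i + q)) = sigmaW n (wordOf u 0 i) := by
      rw [sigma_block i q, hz, mul_one]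
    have hwper : ∀ t, t + q < q + (n - 1) →
        pansiotWord n hn u (i + t) = pansiotWord n hn u (i + t + q) := by
      intro t ht
      have e1 := pansiot_window hn u i t (by omega)
      have e2 := pansiot_window hn u (i + q) t (by omega)
      rw [show i + t + q = i + q + t by omega, e1, e2, hρ]
    obtain ⟨f, hfi, hfl, hfp⟩ := reduction hn hr₁ h0 h1 hfix hfac2 i (q + (n - 1)) q hq
      (by omega) hwper
    exact hch2 q hq ⟨f, hfi, hfl, hfp⟩
  · -- descent
    have hdvd : r ∣ q := r_dvd_q hn hfix h0 h1 hr₁ hmark hq he hper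
    obtain ⟨q', hq'def⟩ : ∃ x, x = q / r := ⟨_, rfl⟩
    have hqrq : q = r * q' := by rw [hq'def]; exact (Nat.mul_div_cancel' hdvd).symm
    have hq'1 : 1 ≤ q' := by
      rcases Nat.eq_zero_or_pos q' with h2 | h2
      · rw [h2, Nat.mul_zero] at hqrq; omega
      · exact h2
    obtain ⟨k₀, hk0def⟩ : ∃ x, x = (i + r - 1) / r := ⟨_, rfl⟩
    have hk0a := Nat.div_add_mod (i + r - 1) r
    have hk0b := Nat.mod_lt (i + r - 1) (show 0 < r by omega)
    rw [← hk0def] at hk0a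
    have hk0l : r * k₀ ≤ i + r - 1 := by omega
    have hk0g : i ≤ r * k₀ := by omega
    obtain ⟨A, hAdef⟩ : ∃ x, x = (i + e - r) / r := ⟨_, rfl⟩
    have hAa := Nat.div_add_mod (i + e - r) r
    have hAb := Nat.mod_lt (i + e - r) (show 0 < r by omega)
    rw [← hAdef] at hAa
    obtain ⟨e', he'def⟩ : ∃ x, x = A + 1 - k₀ := ⟨_, rfl⟩
    -- key block fact
    have hblock : ∀ K, i ≤ r * K → r * K ≤ i + e - r → u K = u (K + q') := by
      intro K hK1 hK2
      have hw : wordOf u (r * K) r = wordOf u (r * (K + q')) r := by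
        have : wordOf u (r * (K + q')) r = wordOf u (r * K + q) r := by
          rw [show r * (K + q') = r * K + q by rw [Nat.mul_add, ← hqrq]]
        rw [this]
        apply wordOf_ext
        intro z hz2
        have hp := hper (r * K + z - i) (by omega)
        rw [show i + (r * K + z - i) = r * K + z by omega] at hp
        rw [show r * K + z + q = r * K + q + z by omega] at hp
        exact hp
      rw [block_eq hfix hR K, block_eq hfix hR (K + q')] at hw
      exact h_letter_inj hne hw
    -- new period
    have hper' : ∀ t, t < e' → u (k₀ + t) = u (k₀ + t + q') := by
      intro t ht
      have hkA : k₀ + t ≤ A := by omega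
      have h2 : r * (k₀ + t) ≤ r * A := Nat.mul_le_mul_left _ hkA
      have h3 : r * k₀ ≤ r * (k₀ + t) := Nat.mul_le_mul_left _ (by omega)
      exact hblock (k₀ + t) (by omega) (by omega)
    -- new sigma
    have hz' : sigmaW n (wordOf u k₀ q') = 1 := by
      have hrot := sigma_rotate hn hper hz (r * k₀ - i) (by omega)
      rw [show i + (r * k₀ - i) = r * k₀ by omega] at hrot
      have hm : sigmaW n (mor h (wordOf u k₀ q')) = 1 := by
        rw [mor_wordOf hfix hR k₀ q', ← hqrq]
        exact hrot
      rw [hτ] at hm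
      have : sigmaW n (wordOf u k₀ q') = τ * (τ⁻¹ * sigmaW n (wordOf u k₀ q') * τ) * τ⁻¹ := by
        group
      rw [this, hm]
      group
    -- bound : e ≤ r * e' + 2 * (r - 1)
    have hebound : e ≤ r * e' + 2 * (r - 1) := by
      rcases Nat.lt_or_ge A k₀ with htr | htr
      · have h2 : r * (A + 1) ≤ r * k₀ := Nat.mul_le_mul_left _ (by omega)
        rw [Nat.mul_add, Nat.mul_one] at h2
        omega
      · have h2 : e' + k₀ = A + 1 := by omega
        have h3 : r * (e' + k₀) = r * (A + 1) := by rw [h2]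
        rw [Nat.mul_add, Nat.mul_add, Nat.mul_one] at h3
        omega
    -- invariant
    have hinv' : q' ≤ e' * (n - 1) + ((n - 1) * (n - 1) + 2 * (n - 1)) := by
      have hA1 : e * (n - 1) ≤ (r * e' + 2 * (r - 1)) * (n - 1) :=
        Nat.mul_le_mul_right _ hebound
      have hA2 : (r * e' + 2 * (r - 1)) * (n - 1)
          = r * (e' * (n - 1)) + (2 * (r - 1)) * (n - 1) := by ring
      have hA3 : (2 * (r - 1)) * (n - 1) + ((n - 1) * (n - 1) + 2 * (n - 1))
          ≤ r * ((n - 1) * (n - 1) + 2 * (n - 1)) := by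
        have e1 : r * ((n - 1) * (n - 1) + 2 * (n - 1))
            = ((r - 1) + 1) * ((n - 1) * (n - 1) + 2 * (n - 1)) := by
          congr 1
          omega
        rw [e1, Nat.add_mul, Nat.one_mul]
        have e2 : (2 * (r - 1)) * (n - 1) ≤ (r - 1) * ((n - 1) * (n - 1) + 2 * (n - 1)) := by
          have e3 : (2 * (r - 1)) * (n - 1) = (r - 1) * (2 * (n - 1)) := by ring
          rw [e3]
          exact Nat.mul_le_mul_left _ (by omega)
        omega
      have hA4 : r * q' ≤ r * (e' * (n - 1) + ((n - 1) * (n - 1) + 2 * (n - 1))) := by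
        rw [Nat.mul_add]
        calc r * q' = q := hqrq.symm
          _ ≤ e * (n - 1) + ((n - 1) * (n - 1) + 2 * (n - 1)) := hinv
          _ ≤ (r * e' + 2 * (r - 1)) * (n - 1) + ((n - 1) * (n - 1) + 2 * (n - 1)) := by omega
          _ = r * (e' * (n - 1)) + ((2 * (r - 1)) * (n - 1) + ((n - 1) * (n - 1) + 2 * (n - 1))) := by
              rw [hA2]; ring
          _ ≤ r * (e' * (n - 1)) + r * ((n - 1) * (n - 1) + 2 * (n - 1)) := by omega
      exact Nat.le_of_mul_le_mul_left hA4 (by omega)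
    have hq'q : q' < q := by
      have h2 : 2 * q' ≤ r * q' := Nat.mul_le_mul_right _ (by omega)
      omega
    exact ihq q' hq'q hq'1 k₀ e' hper' hz' hinv'

end CRLemmas

/-- The main construction: if the `r`-uniform morphism `h` (with `2 ≤ r ≤ 4n` and
`h(0) ≠ h(1)`) satisfies the algebraic condition for `σ_n`, every length-`r` factor of
its non-ultimately-periodic fixed point `𝐮` is markable, every length-2 factor of `𝐮`
is a factor of `0110`, `⌊(⌊(9n²−6n+1+2(r−1))/r⌋+2(r−1))/r⌋ ≤ 2`, and the Pansiot
decoding `v = D_n(h²(0110))` contains no factor of exponent `> n/(n−1)` and no factor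
of period `q` and length `q+n−1`, then the word `w` over `Σ_n` with prefix
`1 2 ⋯ (n−1)` and Pansiot encoding `𝐮` contains no factor of exponent greater than
`n/(n−1)`: every factor of `w` with period `q ≥ 1` has length at most `q·n/(n−1)`. -/
theorem main_construction (n : ℕ) (hn : 2 ≤ n)
    (h : Bool → List Bool) (r : ℕ) (hr₁ : 2 ≤ r) (hr₂ : r ≤ 4 * n)
    (h0 : (h false).length = r) (h1 : (h true).length = r) (hne : h false ≠ h true)
    (u : ℕ → Bool) (hfix : FixedPointOf h u)
    (hnup : ¬ ∃ N p : ℕ, 1 ≤ p ∧ ∀ i, N ≤ i → u (i + p) = u i)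
    (halg : AlgCond n h)
    (hmark : ∀ v : List Bool, v.length = r → (∃ i, OccursAt v u i) → Markable h r u v)
    (hfac2 : ∀ v : List Bool, v.length = 2 → (∃ i, OccursAt v u i) →
      v <:+: [false, true, true, false])
    (hiter : ((9 * n ^ 2 - 6 * n + 1 + 2 * (r - 1)) / r + 2 * (r - 1)) / r ≤ 2)
    (hcheck :
      (∀ f : List (Fin n), ∀ q : ℕ,
          f <:+: pansiotDecode n hn (mor h (mor h [false, true, true, false])) →
          1 ≤ q → HasPeriodL f q → (f.length : ℚ) ≤ (q : ℚ) * n / (n - 1)) ∧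
        (∀ q : ℕ, 1 ≤ q → ¬ ∃ f : List (Fin n),
          f <:+: pansiotDecode n hn (mor h (mor h [false, true, true, false])) ∧
          f.length = q + (n - 1) ∧ HasPeriodL f q)) :
    ∀ i L q : ℕ, 1 ≤ q → HasPeriodL (wordOf (pansiotWord n hn u) i L) q →
      (L : ℚ) ≤ (q : ℚ) * n / (n - 1) := by
  obtain ⟨hch1, hch2⟩ := hcheck
  obtain ⟨τ, hτ⟩ := sigmaW_mor halg
  have hrn : 3 * n - 1 ≤ r := hiter_arith hn hr₁ hiter
  intro i L q hq hper
  by_contra hcon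
  push_neg at hcon
  rw [hasPeriodL_wordOf_iff] at hper
  have hn1 : (0 : ℚ) < (n : ℚ) - 1 := by
    have h2 : (2 : ℚ) ≤ (n : ℚ) := by exact_mod_cast hn
    linarith
  have hnat : q * n < L * (n - 1) := by
    have h3 : (q : ℚ) * n < L * ((n : ℚ) - 1) := by
      rw [div_lt_iff₀ hn1] at hcon
      linarith
    have h4 : ((q * n : ℕ) : ℚ) < ((L * (n - 1) : ℕ) : ℚ) := by
      push_cast [Nat.cast_sub (show 1 ≤ n by omega)]
      linarith
    exact_mod_cast h4
  rcases le_or_gt L (r * r + n) with hL | hL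
  · obtain ⟨f, hfi, hfl, hfp⟩ := reduction hn hr₁ h0 h1 hfix hfac2 i L q hq hL hper
    have h5 := hch1 f q hfi hq hfp
    rw [hfl] at h5
    linarith
  · have hrr_n : n ≤ r := by omega
    have hnn : n * n ≤ r * r := Nat.mul_le_mul hrr_n hrr_n
    have hLq : q + (n - 1) ≤ L := by
      by_contra hc
      push_neg at hc
      have hmul : (L + 2 - n) * n ≤ q * n := Nat.mul_le_mul_right _ (by omega)
      have hexp : (L + 2 - n) * n + n * n = L * n + 2 * n := by
        have h5 : L + 2 - n + n = L + 2 := by omega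
        calc (L + 2 - n) * n + n * n = (L + 2 - n + n) * n := by ring
          _ = (L + 2) * n := by rw [h5]
          _ = L * n + 2 * n := by ring
      have hLn : L * (n - 1) + L = L * n := by
        have h6 : n - 1 + 1 = n := by omega
        calc L * (n - 1) + L = L * (n - 1 + 1) := by ring
          _ = L * n := by rw [h6]
      omega
    have hwin : ∀ j, i ≤ j → j + q + (n - 1) ≤ i + L →
        sigmaW n (wordOf u 0 (j + q)) = sigmaW n (wordOf u 0 j) := by
      intro j hj1 hj2
      apply perm_eq_of_agree hn
      intro k hk
      have e1 := pansiot_window hn u (j + q) k hk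
      have e2 := pansiot_window hn u j k hk
      rw [← e1, ← e2]
      have e3 := hper (j - i + k) (by omega)
      rw [show i + (j - i + k) = j + k by omega] at e3
      rw [show j + k + q = j + q + k by omega] at e3
      exact e3.symm
    have hz0 : sigmaW n (wordOf u i q) = 1 := by
      have hw := hwin i (le_refl i) (by omega)
      have hsb := sigma_block (n := n) (u := u) i q
      rw [hw] at hsb
      exact (mul_left_cancel (a := sigmaW n (wordOf u 0 i))
        (show sigmaW n (wordOf u 0 i) * 1 = sigmaW n (wordOf u 0 i) * sigmaW n (wordOf u i q) by
          rw [mul_one]; exact hsb)).symm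
    have huper : ∀ t, t < L - q - (n - 1) → u (i + t) = u (i + t + q) := by
      intro t ht
      have w1 := hwin (i + t) (by omega) (by omega)
      have w2 := hwin (i + t + 1) (by omega) (by omega)
      have r1 := sigmaW_wordOf_succ (n := n) u (i + t)
      have r2 := sigmaW_wordOf_succ (n := n) u (i + t + q)
      rw [show i + t + q + 1 = i + t + 1 + q by omega] at r2
      rw [w2, w1, r1] at r2
      exact sigmaLetter_inj hn (mul_left_cancel r2)
    have hinv : q ≤ (L - q - (n - 1)) * (n - 1) + ((n - 1) * (n - 1) + 2 * (n - 1)) := by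
      have hsum : L = q + (n - 1) + (L - q - (n - 1)) := by omega
      have hexp2 : L * (n - 1)
          = q * (n - 1) + (n - 1) * (n - 1) + (L - q - (n - 1)) * (n - 1) := by
        calc L * (n - 1) = (q + (n - 1) + (L - q - (n - 1))) * (n - 1) := by rw [← hsum]
          _ = q * (n - 1) + (n - 1) * (n - 1) + (L - q - (n - 1)) * (n - 1) := by ring
      have hqn : q * n = q * (n - 1) + q := by
        have h6 : n - 1 + 1 = n := by omega
        calc q * n = q * (n - 1 + 1) := by rw [h6]
          _ = q * (n - 1) + q := by ring
      omega
    exact kr_contradiction hn hr₁ h0 h1 hne hfix hmark hfac2 τ hτ hrn hch2 q hq i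
      (L - q - (n - 1)) huper hz0 hinv
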